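/- Let (X,d) be a proper geodesic metric space and let ν be a Borel measure on X whose support is all of X and which is finite on bounded sets, satisfying the Bishop–Gromov inequality with parameters (K,N), where K ≤ 0 and 1 < N < ∞. Suppose the non-collapsing condition holds: there exist r₀, V₀, V₁ > 0 with V₀ ≤ ν(B(x,r₀)) ≤ V₁ for all x ∈ X. Let ε > 0, let 𝒩 be a maximal ε-separated net in X with discretization graph G(𝒩), and fix basepoints x₀ ∈ X and p₀ ∈ 𝒩. Then (X,d,ν) has polynomial volume growth if and only if G(𝒩) has polynomial growth. -/

import Mathlib

open MeasureTheory Metric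

/-- The model volume density `S_K^N` for `K ≤ 0`, `1 < N < ∞`. -/
noncomputable def SKN (K N t : ℝ) : ℝ :=
  if K = 0 then t ^ (N - 1)
  else Real.sinh (Real.sqrt (|K| / (N - 1)) * t) ^ (N - 1)

/-- A Borel measure `ν` of full support satisfies the Bishop–Gromov inequality with
parameters `(K, N)` if for every `x` the function
`r ↦ ν(B(x,r)) / ∫₀^r S_K^N(t) dt` is nonincreasing on `(0, ∞)`. -/
def BishopGromov {X : Type*} [MetricSpace X] [MeasurableSpace X]
    (ν : Measure X) (K N : ℝ) : Prop :=
  ∀ x : X, AntitoneOn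
    (fun r => (ν (ball x r)).toReal / ∫ t in (0:ℝ)..r, SKN K N t) (Set.Ioi 0)

/-- A metric space is geodesic if every pair of points is joined by a geodesic
(an isometric image of a real interval). -/
def IsGeodesicSpace (X : Type*) [MetricSpace X] : Prop :=
  ∀ x y : X, ∃ f : ℝ → X, f 0 = x ∧ f (dist x y) = y ∧
    ∀ s ∈ Set.Icc (0:ℝ) (dist x y), ∀ t ∈ Set.Icc (0:ℝ) (dist x y),
      dist (f s) (f t) = |s - t|

/-- A subset `𝒩` of a metric space is `ε`-separated if distinct points of `𝒩` are at
distance at least `ε`. -/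
def IsSeparated {X : Type*} [MetricSpace X] (𝒩 : Set X) (ε : ℝ) : Prop :=
  ∀ p ∈ 𝒩, ∀ q ∈ 𝒩, p ≠ q → ε ≤ dist p q

/-- A maximal `ε`-separated net: an `ε`-separated set maximal with respect to inclusion. -/
def IsMaximalNet {X : Type*} [MetricSpace X] (𝒩 : Set X) (ε : ℝ) : Prop :=
  IsSeparated 𝒩 ε ∧ ∀ M : Set X, 𝒩 ⊆ M → IsSeparated M ε → M = 𝒩

/-- The discretization graph `G(𝒩)`: vertices are points of `𝒩`, and distinct `p, q`
are adjacent iff `B(p,ε) ∩ B(q,ε) ≠ ∅`, equivalently `dist p q < 2ε`. -/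
def netGraph {X : Type*} [MetricSpace X] (𝒩 : Set X) (ε : ℝ) : SimpleGraph 𝒩 where
  Adj p q := p ≠ q ∧ dist (p : X) (q : X) < 2 * ε
  symm := by
    constructor
    intro p q h
    exact ⟨h.1.symm, by rw [dist_comm]; exact h.2⟩
  loopless := by
    constructor
    intro p h
    exact h.1 rfl

/-- A connected graph with basepoint `v₀` has polynomial growth if the cardinality of
combinatorial balls is eventually bounded by `C·r^k`. -/
def GraphPolyGrowth {V : Type*} (G : SimpleGraph V) (v₀ : V) : Prop :=
  ∃ C > (0:ℝ), ∃ k > (0:ℝ), ∃ r₁ > (0:ℝ), ∀ r : ℝ, r₁ ≤ r →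
    (({v : V | (G.dist v₀ v : ℝ) ≤ r}.ncard : ℝ)) ≤ C * r ^ k

/-- A connected graph with basepoint `v₀` has exponential growth if
`limsup_{r→∞} (1/r)·log #{v : 𝐝(v₀,v) ≤ r} > 0`. -/
def GraphExpGrowth {V : Type*} (G : SimpleGraph V) (v₀ : V) : Prop :=
  0 < Filter.limsup
    (fun r : ℝ => Real.log (({v : V | (G.dist v₀ v : ℝ) ≤ r}.ncard : ℝ)) / r)
    Filter.atTop

/-- A metric measure space with basepoint `x₀` has polynomial volume growth if
`ν(B(x₀,r)) ≤ C·r^k` for all sufficiently large `r`. -/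
def VolumePolyGrowth {X : Type*} [MetricSpace X] [MeasurableSpace X]
    (ν : Measure X) (x₀ : X) : Prop :=
  ∃ C > (0:ℝ), ∃ k > (0:ℝ), ∃ r₁ > (0:ℝ), ∀ r : ℝ, r₁ ≤ r →
    (ν (ball x₀ r)).toReal ≤ C * r ^ k

/-- A metric measure space with basepoint `x₀` has exponential volume growth if
`limsup_{r→∞} (1/r)·log ν(B(x₀,r)) > 0`. -/
def VolumeExpGrowth {X : Type*} [MetricSpace X] [MeasurableSpace X]
    (ν : Measure X) (x₀ : X) : Prop :=
  0 < Filter.limsup (fun r : ℝ => Real.log (ν (ball x₀ r)).toReal / r) Filter.atTop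

section SKNlem
variable {K N : ℝ} (hN : 1 < N)

lemma SKN_monoOn (hN : 1 < N) : MonotoneOn (SKN K N) (Set.Ici 0) := by
  intro a ha b hb hab
  simp only [SKN]
  have hN' : (0:ℝ) ≤ N - 1 := by linarith
  split_ifs with h
  · exact Real.rpow_le_rpow ha hab hN'
  · have hc : 0 ≤ Real.sqrt (|K| / (N - 1)) := Real.sqrt_nonneg _
    refine Real.rpow_le_rpow ?_ ?_ hN'
    · exact Real.sinh_nonneg_iff.2 (mul_nonneg hc ha)
    · exact Real.sinh_le_sinh.2 (by nlinarith [Set.mem_Ici.1 ha])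

lemma SKN_pos (hN : 1 < N) (hKne : K ≤ 0) {t : ℝ} (ht : 0 < t) : 0 < SKN K N t := by
  simp only [SKN]
  split_ifs with h
  · exact Real.rpow_pos_of_pos ht _
  · have h1 : 0 < |K| := abs_pos.2 h
    have h2 : 0 < |K| / (N - 1) := div_pos h1 (by linarith)
    have hc : 0 < Real.sqrt (|K| / (N - 1)) := Real.sqrt_pos.2 h2
    exact Real.rpow_pos_of_pos (Real.sinh_pos_iff.2 (mul_pos hc ht)) _

lemma SKN_intIntegrable (hN : 1 < N) {r : ℝ} (hr : 0 ≤ r) :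
    IntervalIntegrable (SKN K N) volume 0 r := by
  apply MonotoneOn.intervalIntegrable
  apply (SKN_monoOn hN).mono
  rw [Set.uIcc_of_le hr]
  exact fun x hx => hx.1

noncomputable def Ikn (K N r : ℝ) : ℝ := ∫ t in (0:ℝ)..r, SKN K N t

lemma Ikn_pos (hN : 1 < N) (hK : K ≤ 0) {r : ℝ} (hr : 0 < r) : 0 < Ikn K N r := by
  apply intervalIntegral.intervalIntegral_pos_of_pos_on (SKN_intIntegrable hN hr.le)
  · exact fun x hx => SKN_pos hN hK hx.1
  · exact hr

lemma SKN_nonneg {K N : ℝ} {t : ℝ} (ht : 0 ≤ t) : 0 ≤ SKN K N t := by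
  simp only [SKN]
  split_ifs with h
  · exact Real.rpow_nonneg ht _
  · exact Real.rpow_nonneg (Real.sinh_nonneg_iff.2 (mul_nonneg (Real.sqrt_nonneg _) ht)) _

lemma Ikn_mono (hN : 1 < N) {a b : ℝ} (ha : 0 ≤ a) (hab : a ≤ b) :
    Ikn K N a ≤ Ikn K N b := by
  have h1 := SKN_intIntegrable (K := K) hN ha
  have h2 := SKN_intIntegrable (K := K) hN (ha.trans hab)
  have h3 : IntervalIntegrable (SKN K N) volume a b := h2.symm.trans h1 |>.symm
  have heq : Ikn K N b = Ikn K N a + ∫ t in a..b, SKN K N t := by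
    rw [Ikn, Ikn, intervalIntegral.integral_add_adjacent_intervals h1 h3]
  rw [heq]
  have h4 : 0 ≤ ∫ t in a..b, SKN K N t :=
    intervalIntegral.integral_nonneg hab (fun u hu => SKN_nonneg (ha.trans hu.1))
  linarith
end SKNlem

section BGlem
variable {X : Type*} [MetricSpace X] [ProperSpace X] [MeasurableSpace X] [BorelSpace X]
variable {ν : Measure X} {K N r₀ V₀ V₁ : ℝ}
variable (hbdd : ∀ s : Set X, Bornology.IsBounded s → ν s < ⊤)
variable (hK : K ≤ 0) (hN : 1 < N) (hBG : BishopGromov ν K N)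
variable (hr₀ : 0 < r₀) (hV₀ : 0 < V₀) (hV₁ : 0 < V₁)
variable (hnc : ∀ x : X, V₀ ≤ (ν (ball x r₀)).toReal ∧ (ν (ball x r₀)).toReal ≤ V₁)

include hbdd in
lemma ball_toReal_mono (x : X) {a b : ℝ} (hab : a ≤ b) :
    (ν (ball x a)).toReal ≤ (ν (ball x b)).toReal :=
  ENNReal.toReal_mono (hbdd _ isBounded_ball).ne (measure_mono (ball_subset_ball hab))

include hbdd hK hN hBG hr₀ hV₁ hnc in
lemma measure_ball_le_M {R : ℝ} (hR : 0 < R) (x : X) :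
    (ν (ball x R)).toReal ≤ V₁ * max 1 (Ikn K N R / Ikn K N r₀) := by
  rcases le_total R r₀ with h | h
  · calc (ν (ball x R)).toReal ≤ (ν (ball x r₀)).toReal := ball_toReal_mono hbdd x h
    _ ≤ V₁ := (hnc x).2
    _ ≤ V₁ * max 1 (Ikn K N R / Ikn K N r₀) := le_mul_of_one_le_right hV₁.le (le_max_left _ _)
  · have hI0 : 0 < Ikn K N r₀ := Ikn_pos hN hK hr₀
    have hIR : 0 < Ikn K N R := Ikn_pos hN hK hR
    have := hBG x (Set.mem_Ioi.2 hr₀) (Set.mem_Ioi.2 hR) h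
    simp only at this
    have h2 : (ν (ball x R)).toReal / Ikn K N R ≤ (ν (ball x r₀)).toReal / Ikn K N r₀ := this
    have h3 : (ν (ball x R)).toReal ≤ (ν (ball x r₀)).toReal / Ikn K N r₀ * Ikn K N R := by
      rw [div_le_iff₀ hIR] at h2; linarith
    calc (ν (ball x R)).toReal ≤ (ν (ball x r₀)).toReal / Ikn K N r₀ * Ikn K N R := h3
    _ ≤ V₁ / Ikn K N r₀ * Ikn K N R := by
        have := (hnc x).2
        have h5 : (ν (ball x r₀)).toReal / Ikn K N r₀ ≤ V₁ / Ikn K N r₀ := by gcongr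
        exact mul_le_mul_of_nonneg_right h5 hIR.le
    _ = V₁ * (Ikn K N R / Ikn K N r₀) := by ring
    _ ≤ V₁ * max 1 (Ikn K N R / Ikn K N r₀) := by
        apply mul_le_mul_of_nonneg_left (le_max_right _ _) hV₁.le

include hbdd hK hN hBG hr₀ hV₀ hnc in
lemma M_le_measure_ball {r : ℝ} (hr : 0 < r) (x : X) :
    V₀ * min 1 (Ikn K N r / Ikn K N r₀) ≤ (ν (ball x r)).toReal := by
  rcases le_total r₀ r with h | h
  · calc V₀ * min 1 (Ikn K N r / Ikn K N r₀) ≤ V₀ := mul_le_of_le_one_right hV₀.le (min_le_left _ _)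
    _ ≤ (ν (ball x r₀)).toReal := (hnc x).1
    _ ≤ (ν (ball x r)).toReal := ball_toReal_mono hbdd x h
  · have hI0 : 0 < Ikn K N r₀ := Ikn_pos hN hK hr₀
    have hIr : 0 < Ikn K N r := Ikn_pos hN hK hr
    have h2 : (ν (ball x r₀)).toReal / Ikn K N r₀ ≤ (ν (ball x r)).toReal / Ikn K N r :=
      hBG x (Set.mem_Ioi.2 hr) (Set.mem_Ioi.2 hr₀) h
    have h3 : V₀ / Ikn K N r₀ ≤ (ν (ball x r)).toReal / Ikn K N r :=
      le_trans (by have := (hnc x).1; gcongr) h2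
    have h4 : V₀ / Ikn K N r₀ * Ikn K N r ≤ (ν (ball x r)).toReal := by
      rw [div_le_div_iff₀ hI0 hIr] at h3
      rw [div_mul_eq_mul_div, div_le_iff₀ hI0]
      linarith
    calc V₀ * min 1 (Ikn K N r / Ikn K N r₀) ≤ V₀ * (Ikn K N r / Ikn K N r₀) :=
          mul_le_mul_of_nonneg_left (min_le_right _ _) hV₀.le
    _ = V₀ / Ikn K N r₀ * Ikn K N r := by ring
    _ ≤ _ := h4
end BGlem

section NetLem
variable {X : Type*} [MetricSpace X] [MeasurableSpace X] [BorelSpace X]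
variable {ν : Measure X} {𝒩 : Set X} {ε : ℝ}
variable (hbdd : ∀ s : Set X, Bornology.IsBounded s → ν s < ⊤)
variable (hε : 0 < ε) (hnet : IsMaximalNet 𝒩 ε)

include hε hnet in
lemma net_covering (x : X) : ∃ p ∈ 𝒩, dist x p < ε := by
  by_contra hcon
  push_neg at hcon
  have hsep : IsSeparated (insert x 𝒩) ε := by
    intro p hp q hq hpq
    rcases hp with rfl | hp
    · rcases hq with rfl | hq
      · exact absurd rfl hpq
      · exact hcon q hq
    · rcases hq with rfl | hq
      · rw [dist_comm]; exact hcon p hp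
      · exact hnet.1 p hp q hq hpq
  have := hnet.2 _ (Set.subset_insert x 𝒩) hsep
  have hx : x ∈ 𝒩 := this ▸ Set.mem_insert x 𝒩
  have := hcon x hx
  simp at this
  linarith

include hbdd hε hnet in
lemma net_packing {m : ℝ} (hm : ∀ y : X, m ≤ (ν (ball y (ε/2))).toReal)
    (x : X) {R : ℝ} (s : Finset X) (hs𝒩 : ↑s ⊆ 𝒩) (hsR : ∀ p ∈ s, dist p x ≤ R) :
    (s.card : ℝ) * m ≤ (ν (ball x (R + ε/2))).toReal := by
  have hdisj : (↑s : Set X).PairwiseDisjoint (fun p => ball p (ε/2)) := by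
    intro p hp q hq hpq
    apply ball_disjoint_ball
    have := hnet.1 p (hs𝒩 hp) q (hs𝒩 hq) hpq
    linarith
  have hsub : ∀ p ∈ s, ball p (ε/2) ⊆ ball x (R + ε/2) := by
    intro p hp y hy
    rw [mem_ball] at hy ⊢
    have := hsR p hp
    calc dist y x ≤ dist y p + dist p x := dist_triangle _ _ _
    _ < R + ε/2 := by linarith
  have hunion : ν (⋃ p ∈ s, ball p (ε/2)) = ∑ p ∈ s, ν (ball p (ε/2)) :=
    measure_biUnion_finset hdisj (fun p _ => measurableSet_ball)
  have hle : ∑ p ∈ s, ν (ball p (ε/2)) ≤ ν (ball x (R + ε/2)) := by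
    rw [← hunion]
    exact measure_mono (Set.iUnion₂_subset hsub)
  have hfin : ν (ball x (R + ε/2)) ≠ ⊤ := (hbdd _ isBounded_ball).ne
  have htR : (∑ p ∈ s, ν (ball p (ε/2))).toReal ≤ (ν (ball x (R + ε/2))).toReal :=
    ENNReal.toReal_mono hfin hle
  have hsum : (∑ p ∈ s, ν (ball p (ε/2))).toReal = ∑ p ∈ s, (ν (ball p (ε/2))).toReal :=
    ENNReal.toReal_sum (fun p _ => (hbdd _ isBounded_ball).ne)
  rw [hsum] at htR
  calc (s.card : ℝ) * m = ∑ _p ∈ s, m := by rw [Finset.sum_const, nsmul_eq_mul]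
  _ ≤ ∑ p ∈ s, (ν (ball p (ε/2))).toReal := Finset.sum_le_sum (fun p _ => hm p)
  _ ≤ _ := htR

include hbdd hε hnet in
lemma net_finite {m : ℝ} (hm0 : 0 < m) (hm : ∀ y : X, m ≤ (ν (ball y (ε/2))).toReal)
    (x : X) {R : ℝ} : (𝒩 ∩ {y | dist y x ≤ R}).Finite := by
  by_contra hinf
  have hinf : (𝒩 ∩ {y | dist y x ≤ R}).Infinite := hinf
  set B := (ν (ball x (R + ε/2))).toReal with hB
  obtain ⟨t, hts, htfin, htcard⟩ := hinf.exists_subset_ncard_eq (⌈B / m⌉.toNat + 1)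
  have hcard : ((⌈B / m⌉.toNat + 1 : ℕ) : ℝ) * m ≤ B := by
    have := net_packing hbdd hε hnet hm x htfin.toFinset
      (by intro p hp; exact (hts (htfin.mem_toFinset.1 hp)).1)
      (by intro p hp; exact (hts (htfin.mem_toFinset.1 hp)).2)
    rw [Set.ncard_eq_toFinset_card t htfin] at htcard
    rwa [htcard] at this
  have h1 : B / m < (⌈B / m⌉.toNat + 1 : ℕ) := by
    push_cast
    calc B / m ≤ ⌈B / m⌉ := Int.le_ceil _
    _ ≤ (⌈B / m⌉.toNat : ℝ) := by exact_mod_cast Int.self_le_toNat _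
    _ < _ := by linarith
  rw [div_lt_iff₀ hm0] at h1
  linarith

include hbdd hε hnet in
lemma net_ncard_le {m : ℝ} (hm0 : 0 < m) (hm : ∀ y : X, m ≤ (ν (ball y (ε/2))).toReal)
    (x : X) {R : ℝ} :
    ((𝒩 ∩ {y | dist y x ≤ R}).ncard : ℝ) * m ≤ (ν (ball x (R + ε/2))).toReal := by
  have hfin := net_finite hbdd hε hnet hm0 hm x (R := R)
  have := net_packing hbdd hε hnet hm x hfin.toFinset
    (by intro p hp; exact (hfin.mem_toFinset.1 hp).1)
    (by intro p hp; exact (hfin.mem_toFinset.1 hp).2)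
  rwa [Set.ncard_eq_toFinset_card _ hfin]
end NetLem

section Chain
variable {X : Type*} [MetricSpace X]
variable {𝒩 : Set X} {ε : ℝ}

/-- Core chain lemma: there is a walk from `p₀` to `v` in the net graph whose length is
bounded linearly in `dist p₀ v`, given a uniform packing bound `P` on the number of net
points in balls of radius `2ε`. -/
lemma exists_walk_linear
    (hgeo : IsGeodesicSpace X) (hε : 0 < ε)
    (hcov : ∀ x : X, ∃ p ∈ 𝒩, dist x p < ε)
    (hfin : ∀ (x : X) (R : ℝ), (𝒩 ∩ {y | dist y x ≤ R}).Finite)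
    {P : ℝ} (hP : ∀ x : X, ((𝒩 ∩ {y | dist y x < 2*ε}).ncard : ℝ) ≤ P)
    (p₀ v : 𝒩) :
    ∃ W : (netGraph 𝒩 ε).Walk p₀ v,
      (W.length : ℝ) ≤ (dist (p₀ : X) (v : X) / ε + 1) * P + 1 := by
  classical
  obtain ⟨f, hf0, hfD, hiso⟩ := hgeo (p₀ : X) (v : X)
  set D := dist (p₀ : X) (v : X) with hD
  have hD0 : 0 ≤ D := dist_nonneg
  set A : 𝒩 → Set ℝ := fun u => {s | s ∈ Set.Icc 0 D ∧ dist (u : X) (f s) < ε} with hA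
  have hAsub : ∀ u, A u ⊆ Set.Icc 0 D := fun u s hs => hs.1
  have hAbdd : ∀ u, BddAbove (A u) := fun u => (isBounded_Icc 0 D).subset (hAsub u) |>.bddAbove
  set τ : 𝒩 → ℝ := fun u => sSup (A u) with hτ
  have hτmem : ∀ u, (A u).Nonempty → τ u ∈ Set.Icc 0 D := by
    intro u hu
    obtain ⟨a, ha⟩ := hu
    constructor
    · exact le_trans ha.1.1 (le_csSup (hAbdd u) ha)
    · exact csSup_le ⟨a, ha⟩ (fun b hb => hb.1.2)
  have hτdist : ∀ u, (A u).Nonempty → dist (u : X) (f (τ u)) ≤ ε := by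
    intro u hu
    refine le_of_forall_pos_le_add ?_
    intro δ hδ
    have h1 : τ u - δ < τ u := by linarith
    obtain ⟨s, hs, hs2⟩ := exists_lt_of_lt_csSup hu h1
    have hsτ : s ≤ τ u := le_csSup (hAbdd u) hs
    have hdd : dist (f s) (f (τ u)) = |s - τ u| := hiso s hs.1 (τ u) (hτmem u hu)
    calc dist (u : X) (f (τ u)) ≤ dist (u : X) (f s) + dist (f s) (f (τ u)) :=
          dist_triangle _ _ _
    _ = dist (u : X) (f s) + |s - τ u| := by rw [hdd]
    _ ≤ dist (u : X) (f s) + δ := by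
        have : |s - τ u| ≤ δ := abs_le.2 ⟨by linarith, by linarith⟩
        linarith
    _ ≤ ε + δ := by have := hs.2; linarith
  have hτeq : ∀ u, (A u).Nonempty → τ u < D → dist (u : X) (f (τ u)) = ε := by
    intro u hu hlt
    rcases lt_or_eq_of_le (hτdist u hu) with h | h
    · exfalso
      set δ := min (ε - dist (u : X) (f (τ u))) (D - τ u) with hδdef
      have hδ : 0 < δ := lt_min (by linarith) (by linarith)
      have hτ0 : 0 ≤ τ u := (hτmem u hu).1
      have hsInt : τ u + δ/2 ∈ Set.Icc 0 D := by
        constructor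
        · linarith
        · have : δ ≤ D - τ u := min_le_right _ _
          linarith
      have hdd : dist (f (τ u + δ/2)) (f (τ u)) = |τ u + δ/2 - τ u| :=
        hiso _ hsInt _ (hτmem u hu)
      have habs : |τ u + δ/2 - τ u| = δ/2 := by
        rw [show τ u + δ/2 - τ u = δ/2 by ring, abs_of_pos (by linarith)]
      have hmem : τ u + δ/2 ∈ A u := by
        refine ⟨hsInt, ?_⟩
        have hδε : δ ≤ ε - dist (u : X) (f (τ u)) := min_le_left _ _
        calc dist (u : X) (f (τ u + δ/2)) ≤
            dist (u : X) (f (τ u)) + dist (f (τ u)) (f (τ u + δ/2)) := dist_triangle _ _ _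
        _ = dist (u : X) (f (τ u)) + δ/2 := by rw [dist_comm (f (τ u)), hdd, habs]
        _ < ε := by linarith
      have := le_csSup (hAbdd u) hmem
      change τ u + δ/2 ≤ τ u at this
      linarith
    · exact h
  -- step lemma
  have hstep : ∀ w : 𝒩, (A w).Nonempty → τ w < D →
      ∃ w' : 𝒩, (netGraph 𝒩 ε).Adj w w' ∧ (A w').Nonempty ∧ τ w < τ w' := by
    intro w hw hlt
    have hweq := hτeq w hw hlt
    obtain ⟨p, hp𝒩, hp⟩ := hcov (f (τ w))
    refine ⟨⟨p, hp𝒩⟩, ⟨?_, ?_⟩, ?_, ?_⟩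
    · intro hcontra
      have hwp : (w : X) = p := congrArg Subtype.val hcontra
      rw [dist_comm, ← hwp, hweq] at hp
      exact lt_irrefl _ hp
    · calc dist (w : X) p ≤ dist (w : X) (f (τ w)) + dist (f (τ w)) p := dist_triangle _ _ _
      _ < ε + ε := by rw [hweq]; linarith
      _ = 2 * ε := by ring
    all_goals {
      have hτw0 : 0 ≤ τ w := (hτmem w hw).1
      set δ := min (ε - dist p (f (τ w))) (D - τ w) with hδdef
      have hδ : 0 < δ := lt_min (by rw [dist_comm] at hp; linarith) (by linarith)
      have hsInt : τ w + δ/2 ∈ Set.Icc 0 D := by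
        constructor
        · linarith
        · have : δ ≤ D - τ w := min_le_right _ _
          linarith
      have hdd : dist (f (τ w + δ/2)) (f (τ w)) = |τ w + δ/2 - τ w| :=
        hiso _ hsInt _ (hτmem w hw)
      have habs : |τ w + δ/2 - τ w| = δ/2 := by
        rw [show τ w + δ/2 - τ w = δ/2 by ring, abs_of_pos (by linarith)]
      have hmem : τ w + δ/2 ∈ A ⟨p, hp𝒩⟩ := by
        refine ⟨hsInt, ?_⟩
        have hδε : δ ≤ ε - dist p (f (τ w)) := min_le_left _ _
        calc dist p (f (τ w + δ/2)) ≤ dist p (f (τ w)) + dist (f (τ w)) (f (τ w + δ/2)) :=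
              dist_triangle _ _ _
        _ = dist p (f (τ w)) + δ/2 := by rw [dist_comm (f (τ w)), hdd, habs]
        _ < ε := by linarith
      first
      | exact ⟨_, hmem⟩
      | { have := le_csSup (hAbdd ⟨p, hp𝒩⟩) hmem
          calc τ w < τ w + δ/2 := by linarith
          _ ≤ τ ⟨p, hp𝒩⟩ := this } }
  -- tube finiteness
  have hTfin : {u : 𝒩 | (A u).Nonempty}.Finite := by
    have himage : Subtype.val '' {u : 𝒩 | (A u).Nonempty} ⊆ 𝒩 ∩ {y | dist y (p₀ : X) ≤ D + ε} := by
      rintro y ⟨u, hu, rfl⟩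
      refine ⟨u.2, ?_⟩
      obtain ⟨s, hs⟩ := hu
      have hdd : dist (f s) (f 0) = |s - 0| := hiso s hs.1 0 ⟨le_refl 0, hD0⟩
      simp only [Set.mem_setOf_eq]
      calc dist (u : X) (p₀ : X) ≤ dist (u : X) (f s) + dist (f s) (p₀ : X) := dist_triangle _ _ _
      _ ≤ ε + dist (f s) (f 0) := by rw [hf0]; have := hs.2; linarith
      _ = ε + |s - 0| := by rw [hdd]
      _ ≤ ε + D := by
          have h1 : |s - 0| = s := by rw [sub_zero, abs_of_nonneg hs.1.1]
          rw [h1]; have := hs.1.2; linarith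
      _ = D + ε := by ring
    have := (hfin (p₀ : X) (D + ε)).subset himage
    exact Set.Finite.of_finite_image this (Subtype.val_injective.injOn) |>.subset (by simp)
  -- endgame: when τ w = D
  have hend : ∀ w : 𝒩, (A w).Nonempty → τ w = D →
      ∃ W : (netGraph 𝒩 ε).Walk w v, W.length ≤ 1 := by
    intro w hw heq
    have h1 : dist (w : X) (v : X) ≤ ε := by
      have := hτdist w hw
      rw [heq, hfD] at this
      exact this
    by_cases hwv : w = v
    · subst hwv
      exact ⟨SimpleGraph.Walk.nil, by simp⟩
    · refine ⟨SimpleGraph.Walk.cons (show (netGraph 𝒩 ε).Adj w v from ⟨hwv, by linarith⟩) SimpleGraph.Walk.nil, by simp⟩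
  -- main induction
  have key : ∀ n : ℕ, ∀ w : 𝒩, (A w).Nonempty →
      ({u : 𝒩 | (A u).Nonempty ∧ τ w < τ u}).ncard ≤ n →
      ∃ W : (netGraph 𝒩 ε).Walk w v, W.length ≤ n + 1 := by
    intro n
    induction n with
    | zero =>
      intro w hw hcard
      rcases lt_or_eq_of_le (hτmem w hw).2 with hlt | heq
      · exfalso
        obtain ⟨w', hadj, hw', hττ⟩ := hstep w hw hlt
        have hmem : w' ∈ {u : 𝒩 | (A u).Nonempty ∧ τ w < τ u} := ⟨hw', hττ⟩
        have hfinS : ({u : 𝒩 | (A u).Nonempty ∧ τ w < τ u}).Finite :=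
          hTfin.subset (fun u hu => hu.1)
        have := (Set.ncard_pos hfinS).2 ⟨w', hmem⟩
        omega
      · exact hend w hw heq
    | succ n ih =>
      intro w hw hcard
      rcases lt_or_eq_of_le (hτmem w hw).2 with hlt | heq
      · obtain ⟨w', hadj, hw', hττ⟩ := hstep w hw hlt
        have hfinS : ({u : 𝒩 | (A u).Nonempty ∧ τ w < τ u}).Finite :=
          hTfin.subset (fun u hu => hu.1)
        have hssub : {u : 𝒩 | (A u).Nonempty ∧ τ w' < τ u} ⊂
            {u : 𝒩 | (A u).Nonempty ∧ τ w < τ u} := by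
          constructor
          · intro u hu
            exact ⟨hu.1, lt_trans hττ hu.2⟩
          · intro hsub
            have := hsub ⟨hw', hττ⟩
            exact lt_irrefl _ this.2
        have hlt2 := Set.ncard_lt_ncard hssub hfinS
        have hcard' : ({u : 𝒩 | (A u).Nonempty ∧ τ w' < τ u}).ncard ≤ n := by omega
        obtain ⟨W, hW⟩ := ih w' hw' hcard'
        exact ⟨SimpleGraph.Walk.cons hadj W, by simp [SimpleGraph.Walk.length_cons]; omega⟩
      · obtain ⟨W, hW⟩ := hend w hw heq
        exact ⟨W, by omega⟩
  -- counting the tube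
  set J : ℕ := ⌊D / ε⌋.toNat + 1 with hJ
  have hcount : (({u : 𝒩 | (A u).Nonempty}).ncard : ℝ) ≤ J * P := by
    have hsub : {u : 𝒩 | (A u).Nonempty} ⊆
        ⋃ j ∈ Finset.range J, {u : 𝒩 | dist (u : X) (f (j * ε)) < 2 * ε} := by
      intro u hu
      obtain ⟨s, hsIcc, hsd⟩ := hu
      set j : ℕ := ⌊s / ε⌋.toNat with hj
      have hsε : 0 ≤ s / ε := div_nonneg hsIcc.1 hε.le
      have hjfl : (j : ℝ) = ⌊s / ε⌋ := by
        rw [hj]; exact_mod_cast Int.toNat_of_nonneg (Int.floor_nonneg.2 hsε)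
      have hjle : (j : ℝ) * ε ≤ s := by
        rw [hjfl]
        have := Int.floor_le (s / ε)
        calc (⌊s / ε⌋ : ℝ) * ε ≤ s / ε * ε := by nlinarith
        _ = s := div_mul_cancel₀ s hε.ne'
      have hjgt : s - (j : ℝ) * ε < ε := by
        rw [hjfl]
        have := Int.lt_floor_add_one (s / ε)
        have h2 : s / ε < ⌊s / ε⌋ + 1 := this
        have h3 : s < (⌊s / ε⌋ + 1 : ℝ) * ε := by
          calc s = s / ε * ε := (div_mul_cancel₀ s hε.ne').symm
          _ < (⌊s / ε⌋ + 1 : ℝ) * ε := by nlinarith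
        nlinarith
      have hjle2 : (j : ℝ) * ε ≤ D := le_trans hjle hsIcc.2
      have hjIcc : (j : ℝ) * ε ∈ Set.Icc 0 D :=
        ⟨mul_nonneg (Nat.cast_nonneg j) hε.le, hjle2⟩
      have hjR : j ∈ Finset.range J := by
        rw [Finset.mem_range, hJ]
        have h4 : (⌊s / ε⌋ : ℤ) ≤ ⌊D / ε⌋ := by
          apply Int.floor_le_floor
          gcongr
          exact hsIcc.2
        have h5 : j ≤ ⌊D / ε⌋.toNat := by
          rw [hj]
          exact Int.toNat_le_toNat h4
        omega
      refine Set.mem_biUnion hjR ?_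
      have hdd : dist (f s) (f ((j : ℝ) * ε)) = |s - (j : ℝ) * ε| := hiso s hsIcc _ hjIcc
      have habs : |s - (j : ℝ) * ε| = s - (j : ℝ) * ε := abs_of_nonneg (by linarith)
      show dist (u : X) (f ((j : ℝ) * ε)) < 2 * ε
      calc dist (u : X) (f ((j : ℝ) * ε)) ≤ dist (u : X) (f s) + dist (f s) (f ((j : ℝ) * ε)) :=
            dist_triangle _ _ _
      _ = dist (u : X) (f s) + (s - (j : ℝ) * ε) := by rw [hdd, habs]
      _ < ε + ε := by linarith
      _ = 2 * ε := by ring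
    -- each piece is finite with ncard ≤ P
    have hCfin : ∀ j : ℕ, ({u : 𝒩 | dist (u : X) (f ((j : ℝ) * ε)) < 2 * ε}).Finite := by
      intro j
      have himg : Subtype.val '' {u : 𝒩 | dist (u : X) (f ((j : ℝ) * ε)) < 2 * ε} ⊆
          𝒩 ∩ {y | dist y (f ((j : ℝ) * ε)) ≤ 2 * ε} := by
        rintro y ⟨u, hu, rfl⟩
        refine ⟨u.2, ?_⟩
        simpa using le_of_lt hu
      exact Set.Finite.of_finite_image ((hfin _ _).subset himg) (Subtype.val_injective.injOn)
    have hCcard : ∀ j : ℕ, (({u : 𝒩 | dist (u : X) (f ((j : ℝ) * ε)) < 2 * ε}).ncard : ℝ) ≤ P := by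
      intro j
      have himg : Subtype.val '' {u : 𝒩 | dist (u : X) (f ((j : ℝ) * ε)) < 2 * ε} =
          𝒩 ∩ {y | dist y (f ((j : ℝ) * ε)) < 2 * ε} := by
        ext y
        constructor
        · rintro ⟨u, hu, rfl⟩; exact ⟨u.2, hu⟩
        · rintro ⟨hy1, hy2⟩; exact ⟨⟨y, hy1⟩, hy2, rfl⟩
      have := Set.ncard_image_of_injective
        {u : 𝒩 | dist (u : X) (f ((j : ℝ) * ε)) < 2 * ε} Subtype.val_injective
      rw [himg] at this
      rw [← this]
      exact hP _
    -- combine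
    classical
    have h1 : hTfin.toFinset ⊆ (Finset.range J).biUnion (fun j => (hCfin j).toFinset) := by
      intro u hu
      rw [Set.Finite.mem_toFinset] at hu
      have := hsub hu
      rw [Set.mem_iUnion₂] at this
      obtain ⟨j, hj, hmem⟩ := this
      rw [Finset.mem_biUnion]
      exact ⟨j, hj, (hCfin j).mem_toFinset.2 hmem⟩
    have h2 : ({u : 𝒩 | (A u).Nonempty}).ncard ≤ ∑ j ∈ Finset.range J, (hCfin j).toFinset.card := by
      rw [Set.ncard_eq_toFinset_card _ hTfin]
      exact le_trans (Finset.card_le_card h1) (Finset.card_biUnion_le)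
    calc (({u : 𝒩 | (A u).Nonempty}).ncard : ℝ) ≤
        ∑ j ∈ Finset.range J, ((hCfin j).toFinset.card : ℝ) := by exact_mod_cast h2
    _ = ∑ j ∈ Finset.range J, (({u : 𝒩 | dist (u : X) (f ((j : ℝ) * ε)) < 2 * ε}).ncard : ℝ) := by
        apply Finset.sum_congr rfl
        intro j _
        rw [Set.ncard_eq_toFinset_card _ (hCfin j)]
    _ ≤ ∑ _j ∈ Finset.range J, P := Finset.sum_le_sum (fun j _ => hCcard j)
    _ = J * P := by rw [Finset.sum_const, Finset.card_range, nsmul_eq_mul]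
  -- assemble
  have hP0 : 0 ≤ P := le_trans (Nat.cast_nonneg _) (hP (p₀ : X))
  have hp₀A : (A p₀).Nonempty := by
    refine ⟨0, ⟨le_refl 0, hD0⟩, ?_⟩
    rw [hf0]
    simpa using hε
  have hsub0 : {u : 𝒩 | (A u).Nonempty ∧ τ p₀ < τ u} ⊆ {u : 𝒩 | (A u).Nonempty} :=
    fun u hu => hu.1
  obtain ⟨W, hW⟩ := key ({u : 𝒩 | (A u).Nonempty ∧ τ p₀ < τ u}).ncard p₀ hp₀A (le_refl _)
  refine ⟨W, ?_⟩
  have hn1 : ({u : 𝒩 | (A u).Nonempty ∧ τ p₀ < τ u}).ncard ≤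
      ({u : 𝒩 | (A u).Nonempty}).ncard := Set.ncard_le_ncard hsub0 hTfin
  have hJD : (J : ℝ) ≤ D / ε + 1 := by
    rw [hJ]
    push_cast
    have h6 : (⌊D / ε⌋.toNat : ℝ) ≤ D / ε := by
      rw [show ((⌊D / ε⌋.toNat : ℕ) : ℝ) = ((⌊D / ε⌋.toNat : ℤ) : ℝ) by push_cast; ring]
      rw [Int.toNat_of_nonneg (Int.floor_nonneg.2 (div_nonneg hD0 hε.le))]
      exact Int.floor_le _
    linarith
  calc (W.length : ℝ) ≤ (({u : 𝒩 | (A u).Nonempty ∧ τ p₀ < τ u}).ncard : ℝ) + 1 := by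
        exact_mod_cast hW
  _ ≤ (({u : 𝒩 | (A u).Nonempty}).ncard : ℝ) + 1 := by exact_mod_cast by omega
  _ ≤ (J : ℝ) * P + 1 := by linarith
  _ ≤ (D / ε + 1) * P + 1 := by nlinarith
end Chain
section Walklem
variable {X : Type*} [MetricSpace X] {𝒩 : Set X} {ε : ℝ}

lemma walk_dist_le (hε : 0 < ε) {p q : 𝒩} (W : (netGraph 𝒩 ε).Walk p q) :
    dist (p : X) (q : X) ≤ 2 * ε * W.length := by
  induction W with
  | nil => simp
  | cons h W ih =>
    rename_i u w r
    rw [SimpleGraph.Walk.length_cons]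
    calc dist (u : X) (r : X) ≤ dist (u : X) (w : X) + dist (w : X) (r : X) := dist_triangle _ _ _
    _ ≤ 2 * ε + 2 * ε * W.length := by have := h.2; linarith
    _ = 2 * ε * (W.length + 1) := by ring
    _ = 2 * ε * ((W.length + 1 : ℕ) : ℝ) := by push_cast; ring

lemma graphball_subset (hgeo : IsGeodesicSpace X) (hε : 0 < ε)
    (hcov : ∀ x : X, ∃ p ∈ 𝒩, dist x p < ε)
    (hfin : ∀ (x : X) (R : ℝ), (𝒩 ∩ {y | dist y x ≤ R}).Finite)
    {P : ℝ} (hP : ∀ x : X, ((𝒩 ∩ {y | dist y x < 2*ε}).ncard : ℝ) ≤ P)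
    (p₀ : 𝒩) {ρ : ℝ} :
    Subtype.val '' {v : 𝒩 | ((netGraph 𝒩 ε).dist p₀ v : ℝ) ≤ ρ} ⊆
      𝒩 ∩ {y | dist y (p₀ : X) ≤ 2 * ε * ρ} := by
  rintro y ⟨v, hv, rfl⟩
  refine ⟨v.2, ?_⟩
  obtain ⟨W, -⟩ := exists_walk_linear hgeo hε hcov hfin hP p₀ v
  have hreach : (netGraph 𝒩 ε).Reachable p₀ v := ⟨W⟩
  obtain ⟨W', hW'⟩ := hreach.exists_walk_length_eq_dist
  have h1 : dist (p₀ : X) (v : X) ≤ 2 * ε * W'.length := walk_dist_le hε W'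
  rw [hW'] at h1
  have h2 : (2:ℝ) * ε * ((netGraph 𝒩 ε).dist p₀ v : ℝ) ≤ 2 * ε * ρ := by
    apply mul_le_mul_of_nonneg_left hv (by linarith)
  simp only [Set.mem_setOf_eq]
  rw [dist_comm]
  have hv' : ((netGraph 𝒩 ε).dist p₀ v : ℝ) ≤ ρ := hv
  linarith
end Walklem


set_option maxHeartbeats 2000000 in
theorem stmt_13 {X : Type*} [MetricSpace X] [ProperSpace X]
    [MeasurableSpace X] [BorelSpace X]
    (hgeo : IsGeodesicSpace X)
    (ν : Measure X)
    (hfull : ∀ x : X, ∀ r > (0:ℝ), 0 < ν (ball x r))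
    (hbdd : ∀ s : Set X, Bornology.IsBounded s → ν s < ⊤)
    (K N : ℝ) (hK : K ≤ 0) (hN : 1 < N)
    (hBG : BishopGromov ν K N)
    (r₀ V₀ V₁ : ℝ) (hr₀ : 0 < r₀) (hV₀ : 0 < V₀) (hV₁ : 0 < V₁)
    (hnc : ∀ x : X, V₀ ≤ (ν (ball x r₀)).toReal ∧ (ν (ball x r₀)).toReal ≤ V₁)
    (ε : ℝ) (hε : 0 < ε) (𝒩 : Set X) (hnet : IsMaximalNet 𝒩 ε)
    (x₀ : X) (p₀ : 𝒩) :
    VolumePolyGrowth ν x₀ ↔ GraphPolyGrowth (netGraph 𝒩 ε) p₀ := by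
  classical
  have hI0 : 0 < Ikn K N r₀ := Ikn_pos hN hK hr₀
  set m : ℝ := V₀ * min 1 (Ikn K N (ε/2) / Ikn K N r₀) with hmdef
  have hm0 : 0 < m :=
    mul_pos hV₀ (lt_min one_pos (div_pos (Ikn_pos hN hK (by linarith)) hI0))
  have hm : ∀ y : X, m ≤ (ν (ball y (ε/2))).toReal := fun y =>
    M_le_measure_ball hbdd hK hN hBG hr₀ hV₀ hnc (by linarith) y
  have hMball : ∀ R : ℝ, 0 < R → ∀ x : X,
      (ν (ball x R)).toReal ≤ V₁ * max 1 (Ikn K N R / Ikn K N r₀) :=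
    fun R hR x => measure_ball_le_M hbdd hK hN hBG hr₀ hV₁ hnc hR x
  have hcov : ∀ x : X, ∃ p ∈ 𝒩, dist x p < ε := net_covering hε hnet
  have hfin : ∀ (x : X) (R : ℝ), (𝒩 ∩ {y | dist y x ≤ R}).Finite :=
    fun x R => net_finite hbdd hε hnet hm0 hm x
  set P : ℝ := V₁ * max 1 (Ikn K N (2*ε + ε/2) / Ikn K N r₀) / m with hPdef
  have hP : ∀ x : X, ((𝒩 ∩ {y | dist y x < 2*ε}).ncard : ℝ) ≤ P := by
    intro x
    have hsub : 𝒩 ∩ {y | dist y x < 2*ε} ⊆ 𝒩 ∩ {y | dist y x ≤ 2*ε} :=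
      fun y hy => ⟨hy.1, show dist y _ ≤ 2*ε from le_of_lt hy.2⟩
    have h1 : ((𝒩 ∩ {y | dist y x < 2*ε}).ncard : ℝ) ≤
        ((𝒩 ∩ {y | dist y x ≤ 2*ε}).ncard : ℝ) := by
      exact_mod_cast Set.ncard_le_ncard hsub (hfin x (2*ε))
    have h2 := net_ncard_le hbdd hε hnet hm0 hm x (R := 2*ε)
    have h3 := hMball (2*ε + ε/2) (by linarith) x
    rw [hPdef, le_div_iff₀ hm0]
    nlinarith
  have hP1 : 1 ≤ P := by
    have hmem : (p₀ : X) ∈ 𝒩 ∩ {y | dist y (p₀ : X) < 2*ε} := by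
      refine ⟨p₀.2, ?_⟩
      simp only [Set.mem_setOf_eq, dist_self]
      linarith
    have hfin2 : (𝒩 ∩ {y | dist y (p₀ : X) < 2*ε}).Finite :=
      (hfin (p₀ : X) (2*ε)).subset (fun y hy => ⟨hy.1, show dist y _ ≤ 2*ε from le_of_lt hy.2⟩)
    have := (Set.ncard_pos hfin2).2 ⟨_, hmem⟩
    calc (1 : ℝ) ≤ ((𝒩 ∩ {y | dist y (p₀ : X) < 2*ε}).ncard : ℝ) := by exact_mod_cast this
    _ ≤ P := hP _
  have hP0 : 0 ≤ P := le_trans zero_le_one hP1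
  constructor
  · rintro ⟨C, hC, k, hk, r₁, hr₁, hvol⟩
    set d₀ : ℝ := dist (p₀ : X) x₀ with hd₀def
    have hd₀ : 0 ≤ d₀ := dist_nonneg
    set c : ℝ := 2*ε + ε/2 + d₀ with hcdef
    have hc0 : 0 < c := by rw [hcdef]; linarith
    refine ⟨C * c ^ k / m, div_pos (mul_pos hC (Real.rpow_pos_of_pos hc0 k)) hm0,
      k, hk, max 1 (r₁ / (2*ε)), lt_of_lt_of_le one_pos (le_max_left _ _), ?_⟩
    intro r hr
    have hr1 : 1 ≤ r := le_trans (le_max_left _ _) hr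
    have hrr : r₁ / (2*ε) ≤ r := le_trans (le_max_right _ _) hr
    have hρ1 : r₁ ≤ 2*ε*r := by
      rw [div_le_iff₀ (by linarith)] at hrr; linarith
    have hsub := graphball_subset hgeo hε hcov hfin hP p₀ (ρ := r)
    have hncard : ({v : 𝒩 | ((netGraph 𝒩 ε).dist p₀ v : ℝ) ≤ r}.ncard : ℝ) ≤
        ((𝒩 ∩ {y | dist y (p₀ : X) ≤ 2*ε*r}).ncard : ℝ) := by
      rw [← Set.ncard_image_of_injective _ Subtype.val_injective]
      exact_mod_cast Set.ncard_le_ncard hsub (hfin _ _)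
    have h2 := net_ncard_le hbdd hε hnet hm0 hm (p₀ : X) (R := 2*ε*r)
    have h3 : (ν (ball (p₀ : X) (2*ε*r + ε/2))).toReal ≤
        (ν (ball x₀ (2*ε*r + ε/2 + d₀))).toReal := by
      apply ENNReal.toReal_mono (hbdd _ isBounded_ball).ne
      exact measure_mono (ball_subset_ball' (by rw [hd₀def]))
    have h4 := hvol (2*ε*r + ε/2 + d₀) (by linarith)
    have h5 : 2*ε*r + ε/2 + d₀ ≤ c * r := by
      rw [hcdef]; nlinarith
    have h6 : (2*ε*r + ε/2 + d₀) ^ k ≤ (c*r) ^ k :=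
      Real.rpow_le_rpow (by linarith) h5 hk.le
    have h7 : (c*r) ^ k = c ^ k * r ^ k := Real.mul_rpow hc0.le (by linarith)
    have hmain : ({v : 𝒩 | ((netGraph 𝒩 ε).dist p₀ v : ℝ) ≤ r}.ncard : ℝ) * m ≤
        C * c ^ k * r ^ k := by
      calc ({v : 𝒩 | ((netGraph 𝒩 ε).dist p₀ v : ℝ) ≤ r}.ncard : ℝ) * m ≤
          ((𝒩 ∩ {y | dist y (p₀ : X) ≤ 2*ε*r}).ncard : ℝ) * m :=
            mul_le_mul_of_nonneg_right hncard hm0.le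
      _ ≤ (ν (ball (p₀ : X) (2*ε*r + ε/2))).toReal := h2
      _ ≤ (ν (ball x₀ (2*ε*r + ε/2 + d₀))).toReal := h3
      _ ≤ C * (2*ε*r + ε/2 + d₀) ^ k := h4
      _ ≤ C * (c ^ k * r ^ k) := by rw [← h7]; exact mul_le_mul_of_nonneg_left h6 hC.le
      _ = C * c ^ k * r ^ k := by ring
    rw [div_mul_eq_mul_div, le_div_iff₀ hm0]
    linarith
  · rintro ⟨C, hC, k, hk, r₁, hr₁, hgr⟩
    set d₀ : ℝ := dist (p₀ : X) x₀ with hd₀def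
    have hd₀ : 0 ≤ d₀ := dist_nonneg
    set Mε : ℝ := V₁ * max 1 (Ikn K N ε / Ikn K N r₀) with hMεdef
    have hMε0 : 0 < Mε := mul_pos hV₁ (lt_of_lt_of_le one_pos (le_max_left _ _))
    set q : ℝ := (d₀ + ε + 1)/ε with hqdef
    have hq1 : 1 ≤ q := by
      rw [hqdef, le_div_iff₀ hε]; linarith
    set c₂ : ℝ := (q + 2) * P + 1 with hc₂def
    have hc₂0 : 0 < c₂ := by nlinarith
    refine ⟨Mε * (C * c₂ ^ k), mul_pos hMε0 (mul_pos hC (Real.rpow_pos_of_pos hc₂0 k)),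
      k, hk, max 1 (ε * r₁), lt_of_lt_of_le one_pos (le_max_left _ _), ?_⟩
    intro R hR
    have hR1 : 1 ≤ R := le_trans (le_max_left _ _) hR
    have hRr : ε * r₁ ≤ R := le_trans (le_max_right _ _) hR
    set ρ : ℝ := ((d₀ + R + ε)/ε + 1) * P + 1 with hρdef
    have hρr₁ : r₁ ≤ ρ := by
      have h1 : R/ε ≤ (d₀ + R + ε)/ε := by gcongr <;> linarith
      have h2 : r₁ ≤ R/ε := by rw [le_div_iff₀ hε]; linarith
      have h3 : R/ε ≤ R/ε * P := le_mul_of_one_le_right (by positivity) hP1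
      have h4 : R/ε * P ≤ (d₀ + R + ε)/ε * P := mul_le_mul_of_nonneg_right h1 hP0
      rw [hρdef]
      linarith
    have hρc₂ : ρ ≤ c₂ * R := by
      have h1 : (d₀ + R + ε)/ε ≤ q * R := by
        rw [hqdef, div_mul_eq_mul_div, div_le_div_iff₀ hε hε]
        have e1 : d₀ ≤ d₀ * R := le_mul_of_one_le_right hd₀ hR1
        have e2 : ε ≤ ε * R := le_mul_of_one_le_right hε.le hR1
        nlinarith [mul_nonneg hε.le (sub_nonneg.2 e1), mul_nonneg hε.le (sub_nonneg.2 e2)]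
      have hPR : P ≤ P * R := le_mul_of_one_le_right hP0 hR1
      have h1P : (d₀ + R + ε)/ε * P ≤ q * R * P := mul_le_mul_of_nonneg_right h1 hP0
      rw [hρdef, hc₂def]
      have hPR0 : (0:ℝ) ≤ P * R := mul_nonneg hP0 (by linarith)
      linarith
    have hρ0 : 0 ≤ ρ := by rw [hρdef]; positivity
    have hdistbound : ∀ v : 𝒩, dist (v : X) x₀ ≤ R + ε →
        ((netGraph 𝒩 ε).dist p₀ v : ℝ) ≤ ρ := by
      intro v hv
      obtain ⟨W, hW⟩ := exists_walk_linear hgeo hε hcov hfin hP p₀ v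
      have hdp : dist (p₀ : X) (v : X) ≤ d₀ + R + ε := by
        calc dist (p₀ : X) (v : X) ≤ dist (p₀ : X) x₀ + dist x₀ (v : X) := dist_triangle _ _ _
        _ ≤ d₀ + (R + ε) := by
            rw [dist_comm x₀ (v : X)]
            exact add_le_add (le_of_eq hd₀def.symm) hv
        _ = d₀ + R + ε := by ring
      have hlen : ((netGraph 𝒩 ε).dist p₀ v : ℝ) ≤ (W.length : ℝ) := by
        exact_mod_cast SimpleGraph.dist_le W
      have hmono : dist (p₀ : X) (v : X) / ε ≤ (d₀ + R + ε)/ε := by gcongr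
      have h6 : (dist (p₀ : X) (v : X) / ε + 1) * P ≤ ((d₀ + R + ε)/ε + 1) * P :=
        mul_le_mul_of_nonneg_right (by linarith) hP0
      rw [hρdef]
      linarith
    set S : Set 𝒩 := {v : 𝒩 | ((netGraph 𝒩 ε).dist p₀ v : ℝ) ≤ ρ} with hSdef
    have hSfin : S.Finite := by
      have h7 := graphball_subset hgeo hε hcov hfin hP p₀ (ρ := ρ)
      exact Set.Finite.of_finite_image ((hfin _ _).subset h7) (Subtype.val_injective.injOn)
    have hgball := hgr ρ hρr₁
    have hFfin : (𝒩 ∩ {y | dist y x₀ ≤ R + ε}).Finite := hfin x₀ (R+ε)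
    have himg : Subtype.val '' {v : 𝒩 | dist (v : X) x₀ ≤ R + ε} =
        𝒩 ∩ {y | dist y x₀ ≤ R + ε} := by
      ext y
      constructor
      · rintro ⟨v, hv, rfl⟩; exact ⟨v.2, hv⟩
      · rintro ⟨h1, h2⟩; exact ⟨⟨y, h1⟩, h2, rfl⟩
    have hFS : ((𝒩 ∩ {y | dist y x₀ ≤ R + ε}).ncard : ℝ) ≤ C * ρ ^ k := by
      rw [← himg, Set.ncard_image_of_injective _ Subtype.val_injective]
      have hsub2 : {v : 𝒩 | dist (v : X) x₀ ≤ R + ε} ⊆ S := fun v hv => hdistbound v hv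
      calc (({v : 𝒩 | dist (v : X) x₀ ≤ R + ε}).ncard : ℝ) ≤ (S.ncard : ℝ) := by
            exact_mod_cast Set.ncard_le_ncard hsub2 hSfin
      _ ≤ C * ρ ^ k := hgball
    set F := hFfin.toFinset with hFdef
    have hcover : ball x₀ R ⊆ ⋃ p ∈ F, ball p ε := by
      intro x hx
      obtain ⟨p, hp𝒩, hpd⟩ := hcov x
      have hx' : dist x x₀ < R := mem_ball.1 hx
      have hpF : p ∈ F := by
        rw [hFdef, Set.Finite.mem_toFinset]
        refine ⟨hp𝒩, ?_⟩
        show dist p x₀ ≤ R + ε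
        calc dist p x₀ ≤ dist p x + dist x x₀ := dist_triangle _ _ _
        _ ≤ R + ε := by rw [dist_comm p x]; linarith
      exact Set.mem_biUnion hpF (mem_ball.2 hpd)
    have hμ1 : ν (ball x₀ R) ≤ ∑ p ∈ F, ν (ball p ε) :=
      le_trans (measure_mono hcover) (measure_biUnion_finset_le _ _)
    have hsumne : (∑ p ∈ F, ν (ball p ε)) ≠ ⊤ :=
      ENNReal.sum_ne_top.2 (fun p _ => (hbdd _ isBounded_ball).ne)
    have hμ2 : (ν (ball x₀ R)).toReal ≤ ∑ p ∈ F, (ν (ball p ε)).toReal := by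
      rw [← ENNReal.toReal_sum (fun p _ => (hbdd _ isBounded_ball).ne)]
      exact ENNReal.toReal_mono hsumne hμ1
    have hμ3 : ∑ p ∈ F, (ν (ball p ε)).toReal ≤ (F.card : ℝ) * Mε := by
      calc ∑ p ∈ F, (ν (ball p ε)).toReal ≤ ∑ _p ∈ F, Mε :=
            Finset.sum_le_sum (fun p _ => hMball ε hε p)
      _ = (F.card : ℝ) * Mε := by rw [Finset.sum_const, nsmul_eq_mul]
    have hFcard : (F.card : ℝ) = ((𝒩 ∩ {y | dist y x₀ ≤ R + ε}).ncard : ℝ) := by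
      rw [hFdef, Set.ncard_eq_toFinset_card _ hFfin]
    have hρk : ρ ^ k ≤ c₂ ^ k * R ^ k := by
      calc ρ ^ k ≤ (c₂ * R) ^ k := Real.rpow_le_rpow hρ0 hρc₂ hk.le
      _ = c₂ ^ k * R ^ k := Real.mul_rpow hc₂0.le (by linarith)
    calc (ν (ball x₀ R)).toReal ≤ (F.card : ℝ) * Mε := le_trans hμ2 hμ3
    _ = ((𝒩 ∩ {y | dist y x₀ ≤ R + ε}).ncard : ℝ) * Mε := by rw [hFcard]
    _ ≤ C * ρ ^ k * Mε := mul_le_mul_of_nonneg_right hFS hMε0.le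
    _ ≤ C * (c₂ ^ k * R ^ k) * Mε := by
        have := mul_le_mul_of_nonneg_left hρk hC.le
        nlinarith [hMε0.le]
    _ = Mε * (C * c₂ ^ k) * R ^ k := by ring
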